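/- For all integers r ≥ 14 and s with 2 ≤ s ≤ 2r − 1, one has log(1 + r²/s) > (4r − 2s)·(log(1 + (2s−1)/(2r²)) + A/(2r²)), where A = 1.00128 and log denotes the natural logarithm over the real numbers. -/

import Mathlib

theorem stmt_7 (r s : ℕ) (hr : 14 ≤ r) (hs1 : 2 ≤ s) (hs2 : s ≤ 2 * r - 1) :
    Real.log (1 + (r : ℝ) ^ 2 / (s : ℝ)) >
      (4 * (r : ℝ) - 2 * (s : ℝ)) *
        (Real.log (1 + (2 * (s : ℝ) - 1) / (2 * (r : ℝ) ^ 2)) +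
          1.00128 / (2 * (r : ℝ) ^ 2)) := by
  have hR : (14:ℝ) ≤ (r:ℝ) := by exact_mod_cast hr
  have hS : (2:ℝ) ≤ (s:ℝ) := by exact_mod_cast hs1
  have hS2 : (s:ℝ) ≤ 2*(r:ℝ) - 1 := by
    have h : s + 1 ≤ 2*r := by omega
    have h' : ((s:ℝ) + 1) ≤ 2*(r:ℝ) := by exact_mod_cast h
    linarith
  set R := (r:ℝ) with hRdef
  set S := (s:ℝ) with hSdef
  have hRpos : (0:ℝ) < R := by linarith
  have hSpos : (0:ℝ) < S := by linarith
  have hR2 : (0:ℝ) < 2*R^2 := by positivity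
  -- lower bound for LHS
  have h8 : (8:ℝ) ≤ 1 + R^2 / S := by
    have : (7:ℝ) ≤ R^2 / S := by
      rw [le_div_iff₀ hSpos]
      nlinarith
    linarith
  have hL : Real.log 8 ≤ Real.log (1 + R^2/S) := by
    apply Real.log_le_log (by norm_num) h8
  -- upper bound for log term
  have hxpos : (0:ℝ) < 1 + (2*S-1)/(2*R^2) := by
    have : (0:ℝ) ≤ (2*S-1)/(2*R^2) := div_nonneg (by linarith) (le_of_lt hR2)
    linarith
  have hx : Real.log (1 + (2*S-1)/(2*R^2)) ≤ (2*S-1)/(2*R^2) := by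
    have := Real.log_le_sub_one_of_pos hxpos
    linarith
  -- log 8 = 3 log 2
  have hlog8 : Real.log 8 = 3 * Real.log 2 := by
    rw [show (8:ℝ) = 2^3 by norm_num, Real.log_pow]
    push_cast; ring
  have hlog2 := Real.log_two_gt_d9
  have hlog8' : (2.0794415409:ℝ) < Real.log 8 := by
    rw [hlog8]; nlinarith
  have hpos : (0:ℝ) < 4*R - 2*S := by linarith
  have step1 : (4*R - 2*S) * (Real.log (1 + (2*S-1)/(2*R^2)) + 1.00128/(2*R^2))
      ≤ (4*R - 2*S) * ((2*S-1)/(2*R^2) + 1.00128/(2*R^2)) := by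
    apply mul_le_mul_of_nonneg_left _ (le_of_lt hpos)
    linarith
  have step2 : (4*R - 2*S) * ((2*S-1)/(2*R^2) + 1.00128/(2*R^2)) < Real.log 8 := by
    have heq : (4*R - 2*S) * ((2*S-1)/(2*R^2) + 1.00128/(2*R^2))
        = (4*R - 2*S) * (2*S - 1 + 1.00128) / (2*R^2) := by
      rw [← add_div, mul_div_assoc]
    rw [heq, div_lt_iff₀ hR2]
    nlinarith [sq_nonneg (4*R - 2*S - (2*S - 1 + 1.00128)), sq_nonneg R, hlog8']
  linarith
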